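/- Let c, m, r be positive integers, Z a real m×c matrix, D a real c×r matrix, and ρ : Fin c → ℝ a strictly positive vector. Then the vector log∘ρ lies in the subspace (range of v ↦ Zᵀ *ᵥ v) + (kernel of v ↦ Dᵀ *ᵥ v) if and only if for every σ : Fin c → ℝ with Z *ᵥ σ = 0 and σ in the range of u ↦ D *ᵥ u, one has ∏ i, (ρ i) ^ (σ i) = 1 (real exponentiation). -/

import Mathlib

open Matrix

section Aux

variable {E F : Type*} [NormedAddCommGroup E] [InnerProductSpace ℝ E]
  [NormedAddCommGroup F] [InnerProductSpace ℝ F]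
  [FiniteDimensional ℝ E] [FiniteDimensional ℝ F]

lemma orth_range_adjoint (B : E →ₗ[ℝ] F) :
    (LinearMap.range (LinearMap.adjoint B))ᗮ = LinearMap.ker B := by
  ext x
  simp only [Submodule.mem_orthogonal, LinearMap.mem_range, LinearMap.mem_ker,
    forall_exists_index]
  constructor
  · intro h
    have := h (LinearMap.adjoint B (B x)) (B x) rfl
    rw [LinearMap.adjoint_inner_left] at this
    exact inner_self_eq_zero.mp this
  · intro h u y hy
    subst hy
    rw [LinearMap.adjoint_inner_left, h, inner_zero_right]

lemma range_adjoint_eq (B : E →ₗ[ℝ] F) :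
    LinearMap.range (LinearMap.adjoint B) = (LinearMap.ker B)ᗮ := by
  rw [← orth_range_adjoint B, Submodule.orthogonal_orthogonal]

lemma sup_orth_eq (K L : Submodule ℝ E) : Kᗮ ⊔ Lᗮ = (K ⊓ L)ᗮ := by
  rw [← Submodule.orthogonal_orthogonal (Kᗮ ⊔ Lᗮ), ← Submodule.inf_orthogonal,
    Submodule.orthogonal_orthogonal, Submodule.orthogonal_orthogonal]

end Aux

theorem log_rho_membership_iff_product_conditions
    (c m r : ℕ) (hc : 0 < c) (hm : 0 < m) (hr : 0 < r)
    (Z : Matrix (Fin m) (Fin c) ℝ)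
    (D : Matrix (Fin c) (Fin r) ℝ)
    (ρ : Fin c → ℝ) (hρ : ∀ i, 0 < ρ i) :
    ((fun i => Real.log (ρ i)) ∈
        LinearMap.range (Matrix.mulVecLin Zᵀ) ⊔ LinearMap.ker (Matrix.mulVecLin Dᵀ)) ↔
      ∀ σ : Fin c → ℝ, Z *ᵥ σ = 0 → (∃ u : Fin r → ℝ, D *ᵥ u = σ) →
        ∏ i, (ρ i) ^ (σ i) = 1 := by
  classical
  -- Work in Euclidean space (definitionally equal to `Fin c → ℝ`)
  set x : Fin c → ℝ := fun i => Real.log (ρ i) with hx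
  have hZH : Zᴴ = Zᵀ := by ext i j; simp
  have hDH : Dᴴ = Dᵀ := by ext i j; simp
  -- the transposed Euclidean maps are adjoints
  have hZadj : Matrix.toEuclideanLin Zᵀ = LinearMap.adjoint (Matrix.toEuclideanLin Z) := by
    rw [← hZH, Matrix.toEuclideanLin_conjTranspose_eq_adjoint]
  have hDadj : Matrix.toEuclideanLin Dᵀ = LinearMap.adjoint (Matrix.toEuclideanLin D) := by
    rw [← hDH, Matrix.toEuclideanLin_conjTranspose_eq_adjoint]
  -- the euclidean versions of the submodules are literally equal (defeq)
  have hEZ : ∀ v : Fin m → ℝ, Matrix.toEuclideanLin Zᵀ (WithLp.toLp 2 v)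
      = WithLp.toLp 2 (Zᵀ *ᵥ v) := fun v => rfl
  have hED : ∀ v : Fin c → ℝ, Matrix.toEuclideanLin Dᵀ (WithLp.toLp 2 v)
      = WithLp.toLp 2 (Dᵀ *ᵥ v) := fun v => rfl
  -- key duality
  have key : LinearMap.range (Matrix.toEuclideanLin Zᵀ) ⊔ LinearMap.ker (Matrix.toEuclideanLin Dᵀ)
      = (LinearMap.ker (Matrix.toEuclideanLin Z) ⊓ LinearMap.range (Matrix.toEuclideanLin D))ᗮ := by
    rw [hZadj, hDadj, range_adjoint_eq]
    have : LinearMap.ker (LinearMap.adjoint (Matrix.toEuclideanLin D))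
        = (LinearMap.range (Matrix.toEuclideanLin D))ᗮ := by
      rw [← orth_range_adjoint (LinearMap.adjoint (Matrix.toEuclideanLin D)),
        LinearMap.adjoint_adjoint]
    rw [this, sup_orth_eq]
  -- membership translation
  have hmem : (x ∈ LinearMap.range (Matrix.mulVecLin Zᵀ) ⊔ LinearMap.ker (Matrix.mulVecLin Dᵀ))
      ↔ ((WithLp.toLp 2 x : EuclideanSpace ℝ (Fin c)) ∈
          LinearMap.range (Matrix.toEuclideanLin Zᵀ) ⊔ LinearMap.ker (Matrix.toEuclideanLin Dᵀ)) := by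
    simp only [Submodule.mem_sup, LinearMap.mem_range, LinearMap.mem_ker]
    constructor
    · rintro ⟨y, ⟨v, rfl⟩, z, hz, hyz⟩
      refine ⟨_, ⟨WithLp.toLp 2 v, rfl⟩, WithLp.toLp 2 z, ?_, ?_⟩
      · rw [hED]
        have hz' : Dᵀ *ᵥ z = 0 := hz
        rw [hz']
        rfl
      · rw [← hyz]
        rfl
    · rintro ⟨y, ⟨v, rfl⟩, z, hz, hyz⟩
      refine ⟨_, ⟨WithLp.ofLp v, rfl⟩, WithLp.ofLp z, ?_, ?_⟩
      · have := congrArg WithLp.ofLp hz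
        exact this
      · have := congrArg WithLp.ofLp hyz
        exact this
  rw [hmem, key]
  -- orthogonality statement, componentwise
  have hinner : ∀ σ : EuclideanSpace ℝ (Fin c),
      inner (𝕜 := ℝ) σ (WithLp.toLp 2 x : EuclideanSpace ℝ (Fin c))
        = ∑ i, σ i * Real.log (ρ i) := by
    intro σ
    simp [PiLp.inner_apply, hx, mul_comm]
  -- product condition as vanishing of the pairing
  have hprod : ∀ σ : Fin c → ℝ,
      (∏ i, (ρ i) ^ (σ i) = 1) ↔ ∑ i, σ i * Real.log (ρ i) = 0 := by
    intro σ
    have : ∀ i, (ρ i) ^ (σ i) = Real.exp (σ i * Real.log (ρ i)) := by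
      intro i
      rw [Real.rpow_def_of_pos (hρ i), mul_comm]
    rw [Finset.prod_congr rfl (fun i _ => this i), ← Real.exp_sum, Real.exp_eq_one_iff]
  constructor
  · intro h σ hσ1 hσ2
    rw [hprod σ]
    have hin := hinner (WithLp.toLp 2 σ)
    simp only [WithLp.ofLp_toLp] at hin
    rw [← hin]
    have hσmem : (WithLp.toLp 2 σ : EuclideanSpace ℝ (Fin c)) ∈
        LinearMap.ker (Matrix.toEuclideanLin Z) ⊓ LinearMap.range (Matrix.toEuclideanLin D) := by
      constructor
      · show WithLp.toLp 2 (Z *ᵥ σ : Fin m → ℝ) = 0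
        rw [hσ1]
        rfl
      · obtain ⟨u, hu⟩ := hσ2
        exact ⟨WithLp.toLp 2 u, congrArg (WithLp.toLp 2) hu⟩
    exact (Submodule.mem_orthogonal (E := EuclideanSpace ℝ (Fin c)) _ _).mp h _ hσmem
  · intro h
    rw [Submodule.mem_orthogonal (E := EuclideanSpace ℝ (Fin c))]
    intro σ hσ
    obtain ⟨hσ1, hσ2⟩ := hσ
    have hZσ : Z *ᵥ (σ : Fin c → ℝ) = 0 := by
      have := congrArg WithLp.ofLp (LinearMap.mem_ker.mp hσ1)
      exact this
    have hDσ : ∃ u : Fin r → ℝ, D *ᵥ u = (σ : Fin c → ℝ) := by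
      obtain ⟨u, hu⟩ := hσ2
      exact ⟨(u : Fin r → ℝ), congrArg WithLp.ofLp hu⟩
    have := h (σ : Fin c → ℝ) hZσ hDσ
    rw [hprod] at this
    rw [hinner]
    exact this
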